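/- Let N be an even positive integer, c₂ real, and c₁ real with c := 2N c₁ an integer. Let k, l, k̃, l̃ be integers, set m̃ = k̃ − c l̃, and let P^{[k̃,l̃]} be the N×N diagonal matrix with entries P[m̄,m̄] = conj(ℰ(m̄, m̃, l̃)) for m̄ = 0,…,N−1, where ℰ(m̄, m̃, l̃) = e^{(2πi/N)(m̄ l̃ + N c₂ (((m̄ + m̃) mod N)² − m̄²))}. Then the DAFT-domain subchannel matrix satisfies H(k,l) · Π_N^{m̃ mod N} · P^{[k̃,l̃]} = e^{−(2πi/N)(N c₁ (2 l l̃ + l̃²) + m̃ l)} · H(k + k̃, l + l̃). That is, the MD-CDDS precoding matrix C = Π_N^{m̃ mod N} P^{[k̃,l̃]} of AFDM converts the subchannel of a path with Doppler k and delay l into a unit-modulus scalar multiple of the subchannel of the effective path with Doppler k + k̃ and delay l + l̃. -/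

import Mathlib

open Matrix Complex

/-- The `N × N` forward cyclic-shift matrix raised to the (integer) power `l`. -/
noncomputable def cyclicShift (N : ℕ) (l : ℤ) : Matrix (Fin N) (Fin N) ℂ :=
  Matrix.of fun p q => if ((p : ℕ) : ZMod N) = ((q : ℕ) : ZMod N) + (l : ZMod N) then 1 else 0

/-- The digital frequency-shift matrix `Δ_N^k = diag(e^{2πi k n / N}, n = 0,…,N−1)`. -/
noncomputable def dopplerShift (N : ℕ) (k : ℤ) : Matrix (Fin N) (Fin N) ℂ :=
  Matrix.diagonal fun n : Fin N =>
    Complex.exp (2 * Real.pi * Complex.I * (k : ℂ) * ((n : ℕ) : ℂ) / (N : ℂ))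

/-- The `N × N` unitary DFT matrix with entries `F[m,n] = e^{−2πi m n / N} / √N`. -/
noncomputable def dftMatrix (N : ℕ) : Matrix (Fin N) (Fin N) ℂ :=
  Matrix.of fun m n : Fin N =>
    Complex.exp (-(2 * Real.pi * Complex.I * ((m : ℕ) : ℂ) * ((n : ℕ) : ℂ) / (N : ℂ))) /
      (Real.sqrt N : ℂ)

/-- For a real parameter `c`, the diagonal chirp matrix `Λ_c = diag(e^{−2πi c q²})`. -/
noncomputable def chirpMatrix (N : ℕ) (c : ℝ) : Matrix (Fin N) (Fin N) ℂ :=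
  Matrix.diagonal fun q : Fin N =>
    Complex.exp (-(2 * Real.pi * Complex.I * (c : ℂ) * ((q : ℕ) : ℂ) ^ 2))

/-- The DAFT matrix `A = Λ_{c₂} F Λ_{c₁}`. -/
noncomputable def daft (N : ℕ) (c₁ c₂ : ℝ) : Matrix (Fin N) (Fin N) ℂ :=
  chirpMatrix N c₂ * dftMatrix N * chirpMatrix N c₁

/-- The DAFT-domain subchannel matrix `H(k,l) = A Δ_N^k Π_N^l Aᴴ`. -/
noncomputable def subChannel (N : ℕ) (c₁ c₂ : ℝ) (k l : ℤ) : Matrix (Fin N) (Fin N) ℂ :=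
  daft N c₁ c₂ * dopplerShift N k * cyclicShift N l * (daft N c₁ c₂)ᴴ

/-- The phase factor `ℰ(m̄, m̃, l̃) = e^{(2πi/N)(m̄ l̃ + N c₂ (((m̄ + m̃) mod N)² − m̄²))}`. -/
noncomputable def calE (N : ℕ) (c₂ : ℝ) (lt mt : ℤ) (mbar : ℤ) : ℂ :=
  Complex.exp ((2 * Real.pi * Complex.I / (N : ℂ)) *
    ((mbar : ℂ) * (lt : ℂ) +
      (N : ℂ) * (c₂ : ℂ) * ((((mbar + mt) % (N : ℤ) : ℤ) : ℂ) ^ 2 - (mbar : ℂ) ^ 2)))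

/-- The diagonal phase-compensation matrix `P^{[k̃,l̃]}` with entries
`P[m̄,m̄] = conj(ℰ(m̄, m̃, l̃))`. -/
noncomputable def phaseComp (N : ℕ) (c₂ : ℝ) (lt mt : ℤ) : Matrix (Fin N) (Fin N) ℂ :=
  Matrix.diagonal fun mbar : Fin N => (starRingEnd ℂ) (calE N c₂ lt mt ((mbar : ℕ) : ℤ))

namespace MD


variable {N : ℕ} [NeZero N]

def eqv (N : ℕ) [NeZero N] : Fin N ≃ ZMod N where
  toFun p := ((p : ℕ) : ZMod N)
  invFun x := ⟨x.val, ZMod.val_lt x⟩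
  left_inv p := Fin.ext (ZMod.val_cast_of_lt p.isLt)
  right_inv x := ZMod.natCast_rightInverse x

def sft (N : ℕ) [NeZero N] (l : ℤ) (q : Fin N) : Fin N :=
  (eqv N).symm ((eqv N) q + (l : ZMod N))

lemma sft_spec (l : ℤ) (q : Fin N) :
    (((sft N l q) : ℕ) : ZMod N) = ((q : ℕ) : ZMod N) + (l : ZMod N) :=
  (eqv N).apply_symm_apply _

lemma cond_iff (l : ℤ) (p q : Fin N) :
    (((p : ℕ) : ZMod N) = ((q : ℕ) : ZMod N) + (l : ZMod N)) ↔ p = sft N l q := by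
  rw [sft, Equiv.eq_symm_apply]; exact Iff.rfl

lemma cond_iff' (l : ℤ) (p q : Fin N) :
    (((p : ℕ) : ZMod N) = ((q : ℕ) : ZMod N) + (l : ZMod N)) ↔ q = sft N (-l) p := by
  rw [← cond_iff]
  push_cast
  constructor <;> intro h <;> linear_combination -h

lemma sft_int (l : ℤ) (q : Fin N) :
    ∃ j : ℤ, ((sft N l q : ℕ) : ℤ) = ((q : ℕ) : ℤ) + l + (N : ℤ) * j := by
  have h := sft_spec (N := N) l q
  have h2 : (((sft N l q : ℕ) : ℤ) : ZMod N) = ((((q : ℕ) : ℤ) + l : ℤ) : ZMod N) := by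
    push_cast
    exact_mod_cast h
  have h3 := (ZMod.intCast_eq_intCast_iff _ _ _).mp h2
  obtain ⟨j, hj⟩ := h3.dvd
  exact ⟨-j, by linarith [hj]⟩

lemma sft_eq_emod (l : ℤ) (q : Fin N) :
    ((sft N l q : ℕ) : ℤ) = (((q : ℕ) : ℤ) + l) % (N : ℤ) := by
  obtain ⟨j, hj⟩ := sft_int (N := N) l q
  have h1 : (0 : ℤ) ≤ ((sft N l q : ℕ) : ℤ) := Int.natCast_nonneg _
  have h2 : ((sft N l q : ℕ) : ℤ) < (N : ℤ) := by exact_mod_cast (sft N l q).isLt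
  have : (((q : ℕ) : ℤ) + l) % (N : ℤ) = ((sft N l q : ℕ) : ℤ) % (N : ℤ) := by
    rw [hj, Int.add_mul_emod_self_left]
  rw [this, Int.emod_eq_of_lt h1 h2]

lemma mul_cyclicShift (M : Matrix (Fin N) (Fin N) ℂ) (l : ℤ) (m n : Fin N) :
    (M * cyclicShift N l) m n = M m (sft N l n) := by
  simp only [Matrix.mul_apply, cyclicShift, Matrix.of_apply]
  simp only [cond_iff, mul_ite, mul_one, mul_zero]
  simp [Finset.sum_ite_eq']

lemma cyclicShift_mul (M : Matrix (Fin N) (Fin N) ℂ) (l : ℤ) (m n : Fin N) :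
    (cyclicShift N l * M) m n = M (sft N (-l) m) n := by
  simp only [Matrix.mul_apply, cyclicShift, Matrix.of_apply]
  simp only [cond_iff', ite_mul, one_mul, zero_mul]
  simp [Finset.sum_ite_eq]

lemma hNC (N : ℕ) [NeZero N] : (N : ℂ) ≠ 0 := Nat.cast_ne_zero.mpr (NeZero.ne N)

lemma dft_conjT (m n : Fin N) :
    (dftMatrix N)ᴴ m n =
      Complex.exp (2 * Real.pi * Complex.I * ((m : ℕ) : ℂ) * ((n : ℕ) : ℂ) / (N : ℂ)) /
        (Real.sqrt N : ℂ) := by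
  simp only [dftMatrix, Matrix.conjTranspose_apply, Matrix.of_apply, Complex.star_def,
    map_div₀, ← Complex.exp_conj, _root_.map_neg, _root_.map_mul, Complex.conj_I,
    Complex.conj_ofReal, map_natCast, map_ofNat]
  congr 1
  ring

lemma R1 (t : ℤ) : dftMatrix N * dopplerShift N t = cyclicShift N t * dftMatrix N := by
  ext m n
  rw [dopplerShift, Matrix.mul_diagonal, cyclicShift_mul]
  obtain ⟨j, hj⟩ := sft_int (N := N) (-t) m
  simp only [dftMatrix, Matrix.of_apply]
  rw [div_mul_eq_mul_div, ← Complex.exp_add]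
  congr 1
  rw [Complex.exp_eq_exp_iff_exists_int]
  refine ⟨j * (n : ℕ), ?_⟩
  have hj' : ((sft N (-t) m : ℕ) : ℂ) = ((m : ℕ) : ℂ) - (t : ℂ) + (N : ℂ) * (j : ℂ) := by
    exact_mod_cast hj
  rw [hj']
  have h0 := hNC N
  field_simp
  push_cast
  ring

lemma R2 (l : ℤ) : dftMatrix N * cyclicShift N l = dopplerShift N (-l) * dftMatrix N := by
  ext m n
  rw [dopplerShift, Matrix.diagonal_mul, mul_cyclicShift]
  obtain ⟨j, hj⟩ := sft_int (N := N) l n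
  simp only [dftMatrix, Matrix.of_apply]
  rw [mul_div_assoc', ← Complex.exp_add]
  congr 1
  rw [Complex.exp_eq_exp_iff_exists_int]
  refine ⟨-(j * (m : ℕ)), ?_⟩
  have hj' : ((sft N l n : ℕ) : ℂ) = ((n : ℕ) : ℂ) + (l : ℂ) + (N : ℂ) * (j : ℂ) := by
    exact_mod_cast hj
  rw [hj']
  have h0 := hNC N
  field_simp
  push_cast
  ring

lemma R3 (s : ℤ) : (dftMatrix N)ᴴ * cyclicShift N s = dopplerShift N s * (dftMatrix N)ᴴ := by
  ext m n
  rw [dopplerShift, Matrix.diagonal_mul, mul_cyclicShift, dft_conjT, dft_conjT]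
  obtain ⟨j, hj⟩ := sft_int (N := N) s n
  rw [mul_div_assoc', ← Complex.exp_add]
  congr 1
  rw [Complex.exp_eq_exp_iff_exists_int]
  refine ⟨j * (m : ℕ), ?_⟩
  have hj' : ((sft N s n : ℕ) : ℂ) = ((n : ℕ) : ℂ) + (s : ℂ) + (N : ℂ) * (j : ℂ) := by
    exact_mod_cast hj
  rw [hj']
  have h0 := hNC N
  field_simp
  push_cast
  ring

lemma R4 (s : ℤ) : (dftMatrix N)ᴴ * dopplerShift N s = cyclicShift N (-s) * (dftMatrix N)ᴴ := by
  ext m n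
  rw [dopplerShift, Matrix.mul_diagonal, cyclicShift_mul, neg_neg, dft_conjT, dft_conjT]
  obtain ⟨j, hj⟩ := sft_int (N := N) s m
  rw [div_mul_eq_mul_div, ← Complex.exp_add]
  congr 1
  rw [Complex.exp_eq_exp_iff_exists_int]
  refine ⟨-(j * (n : ℕ)), ?_⟩
  have hj' : ((sft N s m : ℕ) : ℂ) = ((m : ℕ) : ℂ) + (s : ℂ) + (N : ℂ) * (j : ℂ) := by
    exact_mod_cast hj
  rw [hj']
  have h0 := hNC N
  field_simp
  push_cast
  ring

lemma CC (hEven : Even N) (c₁ : ℝ) (c : ℤ) (hc : 2 * (N : ℝ) * c₁ = (c : ℝ)) (k l : ℤ) :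
    chirpMatrix N c₁ * dopplerShift N k * cyclicShift N l * (chirpMatrix N c₁)ᴴ =
      Complex.exp (2 * Real.pi * Complex.I * (c₁ : ℂ) * (l : ℂ) ^ 2) •
        (dopplerShift N (k - c * l) * cyclicShift N l) := by
  obtain ⟨t, ht⟩ := hEven
  ext m n
  rw [chirpMatrix, dopplerShift, Matrix.diagonal_mul_diagonal, Matrix.diagonal_conjTranspose,
    Matrix.mul_diagonal, Matrix.diagonal_mul, Matrix.smul_apply, dopplerShift,
    Matrix.diagonal_mul]
  simp only [cyclicShift, Matrix.of_apply, Pi.star_apply, Complex.star_def, ← Complex.exp_conj,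
    _root_.map_neg, _root_.map_mul, map_pow, Complex.conj_I, Complex.conj_ofReal,
    map_natCast, map_ofNat]
  simp only [cond_iff]
  split_ifs with h
  · obtain ⟨j, hj⟩ := sft_int (N := N) l n
    rw [← h] at hj
    have hm' : ((m : ℕ) : ℂ) = ((n : ℕ) : ℂ) + (l : ℂ) + (N : ℂ) * (j : ℂ) := by exact_mod_cast hj
    have hcC : 2 * (N : ℂ) * (c₁ : ℂ) = (c : ℂ) := by exact_mod_cast hc
    have hNt : (N : ℂ) = (t : ℂ) + (t : ℂ) := by exact_mod_cast ht
    have ht0 : (t : ℂ) + (t : ℂ) ≠ 0 := by rw [← hNt]; exact hNC N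
    rw [mul_one, mul_one, ← Complex.exp_add, ← Complex.exp_add, smul_eq_mul, ← Complex.exp_add,
      Complex.exp_eq_exp_iff_exists_int]
    refine ⟨-(c * j * (n : ℕ) + c * j * j * (t : ℤ)), ?_⟩
    push_cast
    rw [hm', ← hcC, hNt]
    have ht1 : (t : ℂ) ≠ 0 := fun h1 => ht0 (by rw [h1]; ring)
    field_simp
    ring
  · simp

lemma PC (c₂ : ℝ) (lt mt : ℤ) :
    (chirpMatrix N c₂)ᴴ * (cyclicShift N mt * phaseComp N c₂ lt mt) =
      cyclicShift N mt * (dopplerShift N (-lt) * (chirpMatrix N c₂)ᴴ) := by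
  ext p n
  rw [chirpMatrix, Matrix.diagonal_conjTranspose, Matrix.diagonal_mul, phaseComp,
    Matrix.mul_diagonal, dopplerShift, Matrix.diagonal_mul_diagonal, Matrix.mul_diagonal]
  simp only [cyclicShift, Matrix.of_apply, Pi.star_apply, Complex.star_def, calE,
    ← Complex.exp_conj, _root_.map_neg, _root_.map_mul, _root_.map_add, _root_.map_sub,
    map_div₀, map_pow, Complex.conj_I, Complex.conj_ofReal, map_natCast, map_intCast,
    map_ofNat]
  simp only [cond_iff]
  split_ifs with h
  · have hp : ((p : ℕ) : ℤ) = (((n : ℕ) : ℤ) + mt) % (N : ℤ) := by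
      rw [h]; exact sft_eq_emod mt n
    have hpC : ((p : ℕ) : ℂ) = (((((n : ℕ) : ℤ) + mt) % (N : ℤ) : ℤ) : ℂ) := by
      exact_mod_cast hp
    have h0 := hNC N
    simp only [one_mul, mul_one]
    rw [← Complex.exp_add, ← Complex.exp_add, hpC]
    congr 1
    push_cast
    field_simp
    ring
  · simp


lemma SD2 (a b : ℤ) :
    cyclicShift N b * dopplerShift N a =
      Complex.exp (-(2 * Real.pi * Complex.I * (a : ℂ) * (b : ℂ) / (N : ℂ))) •
        (dopplerShift N a * cyclicShift N b) := by
  ext m n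
  rw [dopplerShift, Matrix.mul_diagonal, Matrix.smul_apply, Matrix.diagonal_mul]
  simp only [cyclicShift, Matrix.of_apply, cond_iff]
  split_ifs with h
  · obtain ⟨j, hj⟩ := sft_int (N := N) b n
    rw [← h] at hj
    have hm' : ((m : ℕ) : ℂ) = ((n : ℕ) : ℂ) + (b : ℂ) + (N : ℂ) * (j : ℂ) := by
      exact_mod_cast hj
    have h0 := hNC N
    simp only [one_mul, mul_one, smul_eq_mul]
    rw [← Complex.exp_add, Complex.exp_eq_exp_iff_exists_int]
    refine ⟨-(a * j), ?_⟩
    push_cast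
    rw [hm']
    field_simp
    ring
  · simp

lemma Padd (a b : ℤ) : cyclicShift N a * cyclicShift N b = cyclicShift N (a + b) := by
  ext m n
  rw [mul_cyclicShift]
  simp only [cyclicShift, Matrix.of_apply]
  refine if_congr ?_ rfl rfl
  rw [sft_spec]
  push_cast
  constructor <;> intro h <;> linear_combination h

lemma Dadd (a b : ℤ) : dopplerShift N a * dopplerShift N b = dopplerShift N (a + b) := by
  simp only [dopplerShift, Matrix.diagonal_mul_diagonal]
  refine congrArg Matrix.diagonal (funext fun q => ?_)
  rw [← Complex.exp_add]
  congr 1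
  push_cast
  ring

lemma CC' (hEven : Even N) (c₁ : ℝ) (c : ℤ) (hc : 2 * (N : ℝ) * c₁ = (c : ℝ)) (k l : ℤ)
    (M : Matrix (Fin N) (Fin N) ℂ) :
    chirpMatrix N c₁ * (dopplerShift N k * (cyclicShift N l * ((chirpMatrix N c₁)ᴴ * M))) =
      Complex.exp (2 * Real.pi * Complex.I * (c₁ : ℂ) * (l : ℂ) ^ 2) •
        (dopplerShift N (k - c * l) * (cyclicShift N l * M)) := by
  simp only [← Matrix.mul_assoc]
  rw [CC hEven c₁ c hc k l]
  simp only [Matrix.smul_mul, Matrix.mul_assoc]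

lemma R3' (s : ℤ) (M : Matrix (Fin N) (Fin N) ℂ) :
    (dftMatrix N)ᴴ * (cyclicShift N s * M) = dopplerShift N s * ((dftMatrix N)ᴴ * M) := by
  rw [← Matrix.mul_assoc, R3, Matrix.mul_assoc]

lemma R4' (s : ℤ) (M : Matrix (Fin N) (Fin N) ℂ) :
    (dftMatrix N)ᴴ * (dopplerShift N s * M) = cyclicShift N (-s) * ((dftMatrix N)ᴴ * M) := by
  rw [← Matrix.mul_assoc, R4, Matrix.mul_assoc]

lemma SD2' (a b : ℤ) (M : Matrix (Fin N) (Fin N) ℂ) :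
    cyclicShift N b * (dopplerShift N a * M) =
      Complex.exp (-(2 * Real.pi * Complex.I * (a : ℂ) * (b : ℂ) / (N : ℂ))) •
        (dopplerShift N a * (cyclicShift N b * M)) := by
  rw [← Matrix.mul_assoc, SD2, Matrix.smul_mul, Matrix.mul_assoc]

lemma Dadd' (a b : ℤ) (M : Matrix (Fin N) (Fin N) ℂ) :
    dopplerShift N a * (dopplerShift N b * M) = dopplerShift N (a + b) * M := by
  rw [← Matrix.mul_assoc, Dadd]

lemma Padd' (a b : ℤ) (M : Matrix (Fin N) (Fin N) ℂ) :
    cyclicShift N a * (cyclicShift N b * M) = cyclicShift N (a + b) * M := by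
  rw [← Matrix.mul_assoc, Padd]

end MD

/-- the MD-CDDS precoding matrix `C = Π_N^{m̃ mod N} P^{[k̃,l̃]}` of AFDM converts
the subchannel of a path with Doppler `k` and delay `l` into a unit-modulus scalar multiple of
the subchannel of the effective path with Doppler `k + k̃` and delay `l + l̃`:
`H(k,l) Π_N^{m̃} P^{[k̃,l̃]} = e^{−(2πi/N)(N c₁ (2 l l̃ + l̃²) + m̃ l)} H(k + k̃, l + l̃)`,
where `m̃ = k̃ − c l̃` and `c = 2 N c₁` is an integer. -/
theorem mdcdds_afdm_subChannel (N : ℕ) (hN : 0 < N) (hEven : Even N)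
    (c₁ c₂ : ℝ) (c : ℤ) (hc : 2 * (N : ℝ) * c₁ = (c : ℝ)) (k l kt lt : ℤ) :
    subChannel N c₁ c₂ k l * cyclicShift N (kt - c * lt) * phaseComp N c₂ lt (kt - c * lt) =
      Complex.exp (-((2 * Real.pi * Complex.I / (N : ℂ)) *
          ((N : ℂ) * (c₁ : ℂ) * (2 * (l : ℂ) * (lt : ℂ) + (lt : ℂ) ^ 2) +
            ((kt - c * lt : ℤ) : ℂ) * (l : ℂ)))) •
        subChannel N c₁ c₂ (k + kt) (l + lt) := by
  haveI : NeZero N := ⟨hN.ne'⟩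
  simp only [subChannel, daft, Matrix.conjTranspose_mul, Matrix.mul_assoc]
  rw [MD.PC c₂ lt (kt - c * lt)]
  rw [MD.R3', MD.R4', neg_neg]
  rw [MD.CC' hEven c₁ c hc k l, MD.CC' hEven c₁ c hc (k + kt) (l + lt)]
  simp only [Matrix.mul_smul]
  rw [MD.SD2']
  simp only [Matrix.mul_smul, smul_smul]
  rw [MD.Dadd', MD.Padd']
  rw [show k - c * l + (kt - c * lt) = k + kt - c * (l + lt) from by ring]
  congr 1
  rw [← Complex.exp_add, ← Complex.exp_add]
  congr 1
  have h0 : (N : ℂ) ≠ 0 := MD.hNC N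
  push_cast
  field_simp
  ring
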